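/- Let A_f ∈ ℝ^{l×l} have spectral radius < ρ for some ρ > 0, and B_f ∈ ℝ^l, C_f ∈ ℝ^{1×l}, D_f ∈ ℝ satisfy C_f·A_f^ν·B_f ≤ 0 for all ν ∈ ℕ and D_f + C_f(ρI - A_f)^{-1}B_f > 0. Then every eigenvalue λ of A_f - B_f·D_f^{-1}·C_f satisfies |λ| < ρ. -/

import Mathlib

open Filter

attribute [local instance] Matrix.linftyOpNormedAddCommGroup Matrix.linftyOpNormedRing
  Matrix.linftyOpNormedSpace Matrix.linftyOpNormedAlgebra

section helpers

lemma norm_entry_one_one (X : Matrix (Fin 1) (Fin 1) ℂ) : ‖X 0 0‖ = ‖X‖ := by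
  simp [Matrix.linfty_opNorm_def, Fin.sum_univ_one]

lemma geom_bound {l : ℕ} [NeZero l] (a : Matrix (Fin l) (Fin l) ℂ) {ρ : ℝ} (hρ : 0 < ρ)
    (h : ∀ μ ∈ spectrum ℂ a, ‖μ‖ < ρ) :
    ∃ r C : ℝ, 0 < r ∧ r < ρ ∧ 0 ≤ C ∧ ∀ n : ℕ, ‖a ^ n‖ ≤ C * r ^ n := by
  have h1 : spectralRadius ℂ a < ENNReal.ofReal ρ := by
    have := spectrum.spectralRadius_lt_of_forall_lt a (r := ρ.toNNReal) (fun z hz => by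
      have := h z hz
      simpa [← NNReal.coe_lt_coe, Real.coe_toNNReal _ hρ.le] using this)
    simpa [ENNReal.ofReal] using this
  have hne : spectralRadius ℂ a ≠ ⊤ := h1.ne_top
  set R : ℝ := (spectralRadius ℂ a).toReal with hR
  have hR0 : 0 ≤ R := ENNReal.toReal_nonneg
  have hRρ : R < ρ := by
    have := ENNReal.toReal_lt_toReal hne (by simp : (ENNReal.ofReal ρ) ≠ ⊤) |>.mpr h1
    simpa [ENNReal.toReal_ofReal hρ.le] using this
  set r : ℝ := (R + ρ) / 2 with hr
  have hr0 : 0 < r := by positivity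
  have hrρ : r < ρ := by simp only [hr]; linarith
  have h2 : spectralRadius ℂ a < ENNReal.ofReal r := by
    rw [← ENNReal.ofReal_toReal hne]
    exact ENNReal.ofReal_lt_ofReal_iff hr0 |>.mpr (by simp only [hr, ← hR]; linarith)
  have hev : ∀ᶠ n : ℕ in atTop, (‖a ^ n‖₊ : ENNReal) ^ (1 / (n : ℝ)) < ENNReal.ofReal r :=
    (spectrum.pow_nnnorm_pow_one_div_tendsto_nhds_spectralRadius a).eventually_lt_const h2
  obtain ⟨N, hN⟩ := eventually_atTop.mp hev
  have key : ∀ n, N + 1 ≤ n → ‖a ^ n‖ ≤ r ^ n := by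
    intro n hn
    have hn1 : 1 ≤ n := le_trans (Nat.le_add_left 1 N) hn
    have h3 := (hN n (le_trans (Nat.le_add_right N 1) hn)).le
    have h4 : ((‖a ^ n‖₊ : ENNReal) ^ (1 / (n : ℝ))) ^ (n : ℝ)
        ≤ (ENNReal.ofReal r) ^ (n : ℝ) := ENNReal.rpow_le_rpow h3 (by positivity)
    rw [← ENNReal.rpow_mul, one_div, inv_mul_cancel₀ (by exact_mod_cast hn1.trans_lt' one_pos |>.ne'), ENNReal.rpow_one] at h4
    rw [ENNReal.ofReal_rpow_of_pos hr0, Real.rpow_natCast] at h4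
    rw [← enorm_eq_nnnorm, ← ofReal_norm] at h4
    exact (ENNReal.ofReal_le_ofReal_iff (by positivity)).mp h4
  refine ⟨r, 1 + ∑ k ∈ Finset.range (N + 1), ‖a ^ k‖ / r ^ k, hr0, hrρ, by positivity, fun n => ?_⟩
  rcases le_or_gt (N + 1) n with hn | hn
  · calc ‖a ^ n‖ ≤ r ^ n := key n hn
      _ ≤ _ := by
        have hS : (0:ℝ) ≤ ∑ k ∈ Finset.range (N + 1), ‖a ^ k‖ / r ^ k :=
          Finset.sum_nonneg (fun k _ => by positivity)
        exact le_mul_of_one_le_left (by positivity) (by linarith)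
  · have hmem : n ∈ Finset.range (N + 1) := Finset.mem_range.mpr hn
    have := Finset.single_le_sum (f := fun k => ‖a ^ k‖ / r ^ k)
      (fun i _ => by positivity) hmem
    have hrn : (0:ℝ) < r ^ n := by positivity
    rw [div_le_iff₀ hrn] at this
    · nlinarith [norm_nonneg (a ^ n), pow_pos hr0 n]

variable {l : ℕ} (a : Matrix (Fin l) (Fin l) ℂ) {r C : ℝ}

lemma summable_aux (hr : 0 < r) (hC : 0 ≤ C) (hb : ∀ n, ‖a ^ n‖ ≤ C * r ^ n)
    {z : ℂ} (hz : r < ‖z‖) (k : ℕ) :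
    Summable (fun n : ℕ => (z⁻¹) ^ (n + k) • a ^ n) := by
  have hz0 : (0:ℝ) < ‖z‖ := hr.trans hz
  refine Summable.of_norm_bounded
    (((summable_geometric_of_lt_one (r := r / ‖z‖) (by positivity)
      (by rwa [div_lt_one hz0])).mul_left (C * ‖z‖⁻¹ ^ k))) (fun n => ?_)
  rw [norm_smul, norm_pow, norm_inv]
  calc ‖z‖⁻¹ ^ (n + k) * ‖a ^ n‖ ≤ ‖z‖⁻¹ ^ (n + k) * (C * r ^ n) := by
        gcongr
        exact hb n
    _ = C * ‖z‖⁻¹ ^ k * (r / ‖z‖) ^ n := by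
        rw [pow_add, div_pow]
        field_simp
        ring_nf
        rw [← mul_pow, mul_inv_cancel₀ hz0.ne', one_pow, one_mul]

set_option maxHeartbeats 1000000 in
lemma neumann (hr : 0 < r) (hC : 0 ≤ C) (hb : ∀ n, ‖a ^ n‖ ≤ C * r ^ n)
    {z : ℂ} (hz : r < ‖z‖) :
    (z • (1 : Matrix (Fin l) (Fin l) ℂ) - a) * (∑' n : ℕ, (z⁻¹) ^ (n + 1) • a ^ n) = 1 := by
  have hz0 : z ≠ 0 := by
    intro h; rw [h, norm_zero] at hz; exact absurd hz (not_lt.mpr hr.le)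
  have hs1 := summable_aux a hr hC hb hz 1
  have hs0 := summable_aux a hr hC hb hz 0
  simp only [add_zero] at hs0
  have hs0' : Summable (fun n : ℕ => (z⁻¹) ^ (n + 1) • a ^ (n + 1)) :=
    (summable_nat_add_iff 1).mpr hs0
  have key : ∀ n : ℕ, (z • (1 : Matrix (Fin l) (Fin l) ℂ) - a) * ((z⁻¹) ^ (n + 1) • a ^ n)
      = (z⁻¹) ^ n • a ^ n - (z⁻¹) ^ (n + 1) • a ^ (n + 1) := by
    intro n
    rw [Matrix.sub_mul, smul_mul_assoc, one_mul, smul_smul, mul_smul_comm, ← pow_succ']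
    congr 2
    rw [pow_succ]
    field_simp
  rw [(hs1.tsum_mul_left (z • (1 : Matrix (Fin l) (Fin l) ℂ) - a)).symm]
  calc (∑' n : ℕ, (z • (1 : Matrix (Fin l) (Fin l) ℂ) - a) * ((z⁻¹) ^ (n + 1) • a ^ n))
      = ∑' n : ℕ, ((z⁻¹) ^ n • a ^ n - (z⁻¹) ^ (n + 1) • a ^ (n + 1)) := by
        exact tsum_congr key
    _ = (∑' n : ℕ, (z⁻¹) ^ n • a ^ n) - ∑' n : ℕ, (z⁻¹) ^ (n + 1) • a ^ (n + 1) :=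
        Summable.tsum_sub hs0 hs0'
    _ = 1 := by
        have h0 := Summable.tsum_eq_zero_add hs0
        simp only [pow_zero, one_smul] at h0
        rw [h0]
        simp

lemma entry_tsum {l : ℕ} (Cc : Matrix (Fin 1) (Fin l) ℂ) (Bc : Matrix (Fin l) (Fin 1) ℂ)
    (g : ℕ → Matrix (Fin l) (Fin l) ℂ) (hg : Summable g) :
    (Cc * (∑' n, g n) * Bc) 0 0 = ∑' n, (Cc * g n * Bc) 0 0 := by
  let φ : Matrix (Fin l) (Fin l) ℂ →ₗ[ℂ] ℂ :=
    { toFun := fun X => (Cc * X * Bc) 0 0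
      map_add' := by intros; simp [Matrix.mul_add, Matrix.add_mul]
      map_smul' := by intros; simp [Matrix.mul_smul, Matrix.smul_mul] }
  exact (LinearMap.toContinuousLinearMap φ).map_tsum hg

end helpers

theorem closed_loop_filter_stable
    (l : ℕ) (ρ : ℝ) (hρ : 0 < ρ)
    (Af : Matrix (Fin l) (Fin l) ℝ) (Bf : Matrix (Fin l) (Fin 1) ℝ)
    (Cf : Matrix (Fin 1) (Fin l) ℝ) (Df : ℝ)
    (hspec : ∀ μ ∈ spectrum ℂ (Af.map (algebraMap ℝ ℂ)), ‖μ‖ < ρ)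
    (hC : ∀ ν : ℕ, (Cf * Af ^ ν * Bf) 0 0 ≤ 0)
    (hpos : 0 < Df + (Cf * (ρ • (1 : Matrix (Fin l) (Fin l) ℝ) - Af)⁻¹ * Bf) 0 0) :
    ∀ μ ∈ spectrum ℂ ((Af - Df⁻¹ • (Bf * Cf)).map (algebraMap ℝ ℂ)), ‖μ‖ < ρ := by
  rcases Nat.eq_zero_or_pos l with hl | hl
  · subst hl
    intro μ hμ
    exact absurd (isUnit_of_subsingleton _) (spectrum.mem_iff.mp hμ)
  haveI : NeZero l := ⟨hl.ne'⟩
  set f := algebraMap ℝ ℂ with hf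
  set Ac : Matrix (Fin l) (Fin l) ℂ := Af.map f with hAc
  set Bc : Matrix (Fin l) (Fin 1) ℂ := Bf.map f with hBc
  set Cc : Matrix (Fin 1) (Fin l) ℂ := Cf.map f with hCc
  -- powers commute with map
  have hpow : ∀ n : ℕ, (Af ^ n).map f = Ac ^ n := fun n => by
    simpa [RingHom.mapMatrix_apply] using map_pow (RingHom.mapMatrix f) Af n
  have hmulmap : ∀ X : Matrix (Fin l) (Fin l) ℝ, (Cf * X * Bf).map f = Cc * X.map f * Bc :=
    fun X => by rw [Matrix.map_mul, Matrix.map_mul]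
  set c : ℕ → ℝ := fun n => (Cf * Af ^ n * Bf) 0 0 with hc
  have centry : ∀ n : ℕ, (Cc * Ac ^ n * Bc) 0 0 = ((c n : ℝ) : ℂ) := fun n => by
    rw [← hpow, ← hmulmap, Matrix.map_apply]; rfl
  -- geometric bound
  obtain ⟨r, K, hr0, hrρ, hK0, hb⟩ := geom_bound Ac hρ hspec
  -- bound on the coefficients
  set E : ℝ := ‖Cc‖ * ‖Bc‖ * K with hE
  have hE0 : 0 ≤ E := by positivity
  have hcb : ∀ n : ℕ, |c n| ≤ E * r ^ n := by
    intro n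
    have h1 : |c n| = ‖(Cc * Ac ^ n * Bc) 0 0‖ := by rw [centry]; simp [Complex.norm_real]
    rw [h1, norm_entry_one_one]
    calc ‖Cc * Ac ^ n * Bc‖ ≤ ‖Cc * Ac ^ n‖ * ‖Bc‖ := Matrix.linfty_opNorm_mul _ _
      _ ≤ ‖Cc‖ * ‖Ac ^ n‖ * ‖Bc‖ := by
          gcongr; exact Matrix.linfty_opNorm_mul _ _
      _ ≤ ‖Cc‖ * (K * r ^ n) * ‖Bc‖ :=
          mul_le_mul (mul_le_mul_of_nonneg_left (hb n) (norm_nonneg Cc))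
            le_rfl (norm_nonneg _) (by positivity)
      _ = E * r ^ n := by rw [hE]; ring
  -- summability of coefficient series
  have hgeo : Summable (fun n : ℕ => (E / ρ) * (r / ρ) ^ n) :=
    (summable_geometric_of_lt_one (by positivity) (by rwa [div_lt_one hρ])).mul_left _
  have hbound : ∀ x : ℕ → ℝ, (∀ n, |x n| ≤ E * r ^ n) →
      ∀ n : ℕ, ‖ρ⁻¹ ^ (n + 1) * x n‖ ≤ (E / ρ) * (r / ρ) ^ n := by
    intro x hx n
    rw [Real.norm_eq_abs, abs_mul, abs_pow, abs_inv, abs_of_pos hρ]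
    calc ρ⁻¹ ^ (n + 1) * |x n| ≤ ρ⁻¹ ^ (n + 1) * (E * r ^ n) :=
          mul_le_mul_of_nonneg_left (hx n) (by positivity)
      _ = (E / ρ) * (r / ρ) ^ n := by
          rw [pow_succ, div_pow, div_eq_mul_inv E, div_eq_mul_inv (r ^ n), ← inv_pow]
          ring
  have hsc : Summable (fun n : ℕ => ρ⁻¹ ^ (n + 1) * c n) :=
    Summable.of_norm_bounded hgeo (hbound c hcb)
  have hsabs : Summable (fun n : ℕ => ρ⁻¹ ^ (n + 1) * |c n|) :=
    Summable.of_norm_bounded hgeo (hbound (fun n => |c n|) (fun n => by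
      rw [abs_abs]; exact hcb n))
  set tR : ℝ := ∑' n : ℕ, ρ⁻¹ ^ (n + 1) * c n with htR
  have htR0 : tR ≤ 0 := tsum_nonpos (fun n => mul_nonpos_of_nonneg_of_nonpos (by positivity) (hC n))
  have habs : (∑' n : ℕ, ρ⁻¹ ^ (n + 1) * |c n|) = -tR := by
    rw [htR, ← tsum_neg]
    exact tsum_congr (fun n => by rw [abs_of_nonpos (hC n)]; ring)
  -- transfer hpos
  have hρr : r < ‖((ρ : ℝ) : ℂ)‖ := by
    rwa [Complex.norm_real, Real.norm_eq_abs, abs_of_pos hρ]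
  have hneu := neumann Ac hr0 hK0 hb hρr
  have hXmap : (ρ • (1 : Matrix (Fin l) (Fin l) ℝ) - Af).map f
      = ((ρ : ℝ) : ℂ) • (1 : Matrix (Fin l) (Fin l) ℂ) - Ac := by
    ext i j
    by_cases h : i = j <;>
      simp [Matrix.map_apply, Matrix.one_apply, h, smul_eq_mul, hf, hAc]
  have hdetρ : IsUnit (((ρ : ℝ) : ℂ) • (1 : Matrix (Fin l) (Fin l) ℂ) - Ac).det :=
    Matrix.isUnit_det_of_right_inverse hneu
  have hXdet : IsUnit (ρ • (1 : Matrix (Fin l) (Fin l) ℝ) - Af).det := by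
    rw [isUnit_iff_ne_zero]
    intro h0
    rw [isUnit_iff_ne_zero] at hdetρ
    apply hdetρ
    rw [← hXmap, ← RingHom.mapMatrix_apply, ← RingHom.map_det, h0, map_zero]
  have hXinvmap : ((ρ • (1 : Matrix (Fin l) (Fin l) ℝ) - Af)⁻¹).map f
      = ∑' n : ℕ, (((ρ : ℝ) : ℂ)⁻¹) ^ (n + 1) • Ac ^ n := by
    apply Matrix.right_inv_eq_right_inv (A := ((ρ : ℝ) : ℂ) • 1 - Ac) _ hneu
    rw [← hXmap, ← Matrix.map_mul, Matrix.mul_nonsing_inv _ hXdet]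
    exact Matrix.map_one _ (map_zero f) (map_one f)
  have hSsum := summable_aux Ac hr0 hK0 hb hρr 1
  have hentry : ((Cf * (ρ • (1 : Matrix (Fin l) (Fin l) ℝ) - Af)⁻¹ * Bf) 0 0 : ℂ) = (tR : ℂ) := by
    have e1 : ((Cf * (ρ • (1 : Matrix (Fin l) (Fin l) ℝ) - Af)⁻¹ * Bf) 0 0 : ℂ)
        = (Cc * (((ρ • (1 : Matrix (Fin l) (Fin l) ℝ) - Af)⁻¹).map f) * Bc) 0 0 := by
      rw [← hmulmap, Matrix.map_apply]; rfl
    rw [e1, hXinvmap, entry_tsum Cc Bc _ hSsum, htR, Complex.ofReal_tsum]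
    apply tsum_congr
    intro n
    rw [Matrix.mul_smul, Matrix.smul_mul, Matrix.smul_apply, centry, smul_eq_mul]
    push_cast
    ring
  have hDt : 0 < Df + tR := by
    have := hentry
    rw [show ((Cf * (ρ • (1 : Matrix (Fin l) (Fin l) ℝ) - Af)⁻¹ * Bf) 0 0 : ℝ) = tR from
      Complex.ofReal_injective hentry] at hpos
    exact hpos
  have hDf0 : 0 < Df := by linarith
  -- final argument
  intro μ hμ
  by_contra hge
  push_neg at hge
  have hμr : r < ‖μ‖ := lt_of_lt_of_le hrρ hge
  set Sμ : Matrix (Fin l) (Fin l) ℂ := ∑' n : ℕ, (μ⁻¹) ^ (n + 1) • Ac ^ n with hSμ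
  have hneuμ : (μ • (1 : Matrix (Fin l) (Fin l) ℂ) - Ac) * Sμ = 1 := neumann Ac hr0 hK0 hb hμr
  have hdetμ : IsUnit (μ • (1 : Matrix (Fin l) (Fin l) ℂ) - Ac).det :=
    Matrix.isUnit_det_of_right_inverse hneuμ
  have hinvμ : (μ • (1 : Matrix (Fin l) (Fin l) ℂ) - Ac)⁻¹ = Sμ := Matrix.inv_eq_right_inv hneuμ
  rw [spectrum.mem_iff, Algebra.algebraMap_eq_smul_one] at hμ
  set d : ℂ := ((Df⁻¹ : ℝ) : ℂ) with hd
  have hBCmap : (Bf * Cf).map f = Bc * Cc := Matrix.map_mul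
  have hMmap : (Af - Df⁻¹ • (Bf * Cf)).map f = Ac - d • (Bc * Cc) := by
    rw [← hBCmap]
    ext i j
    simp only [Matrix.map_apply, Matrix.sub_apply, Matrix.smul_apply, smul_eq_mul, hf, hd, hAc,
      Complex.coe_algebraMap]
    push_cast
    ring
  have hsplit : μ • (1 : Matrix (Fin l) (Fin l) ℂ) - (Ac - d • (Bc * Cc))
      = (μ • (1 : Matrix (Fin l) (Fin l) ℂ) - Ac) + Bc * (d • Cc) := by
    rw [Matrix.mul_smul]
    abel
  have hdet0 : (μ • (1 : Matrix (Fin l) (Fin l) ℂ) - (Af - Df⁻¹ • (Bf * Cf)).map f).det = 0 := by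
    by_contra hne
    exact hμ ((Matrix.isUnit_iff_isUnit_det _).mpr (isUnit_iff_ne_zero.mpr hne))
  rw [hMmap, hsplit, Matrix.det_add_mul Bc (d • Cc) hdetμ] at hdet0
  have hfac : ((1 : Matrix (Fin 1) (Fin 1) ℂ) + (d • Cc) * (μ • (1 : Matrix (Fin l) (Fin l) ℂ) - Ac)⁻¹ * Bc).det = 0 := by
    rcases mul_eq_zero.mp hdet0 with h | h
    · exact absurd h (isUnit_iff_ne_zero.mp hdetμ)
    · exact h
  set w : ℂ := (Cc * Sμ * Bc) 0 0 with hw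
  have hfac2 : 1 + d * w = 0 := by
    rw [hinvμ, Matrix.det_fin_one] at hfac
    rw [← hfac, Matrix.add_apply, Matrix.smul_mul, Matrix.smul_mul, Matrix.smul_apply,
      smul_eq_mul, hw, Matrix.one_apply_eq]
  have hwD : w = -(Df : ℂ) := by
    have hd' : d = ((Df : ℝ) : ℂ)⁻¹ := by rw [hd]; push_cast; ring
    have hDfne : ((Df : ℝ) : ℂ) ≠ 0 := by
      simpa using hDf0.ne'
    rw [hd'] at hfac2
    field_simp at hfac2
    linear_combination hfac2
  have hwser : w = ∑' n : ℕ, (μ⁻¹) ^ (n + 1) * ((c n : ℝ) : ℂ) := by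
    rw [hw, hSμ, entry_tsum Cc Bc _ (summable_aux Ac hr0 hK0 hb hμr 1)]
    exact tsum_congr fun n => by
      rw [Matrix.mul_smul, Matrix.smul_mul, Matrix.smul_apply, centry, smul_eq_mul]
  have htermle : ∀ n : ℕ, ‖(μ⁻¹) ^ (n + 1) * ((c n : ℝ) : ℂ)‖ ≤ ρ⁻¹ ^ (n + 1) * |c n| := by
    intro n
    rw [norm_mul, norm_pow, norm_inv, Complex.norm_real, Real.norm_eq_abs]
    apply mul_le_mul_of_nonneg_right _ (abs_nonneg _)
    apply pow_le_pow_left₀ (by positivity)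
    exact inv_anti₀ hρ hge
  have hsnorm : Summable (fun n : ℕ => ‖(μ⁻¹) ^ (n + 1) * ((c n : ℝ) : ℂ)‖) :=
    Summable.of_nonneg_of_le (fun n => norm_nonneg _) htermle hsabs
  have hnormw : ‖w‖ ≤ -tR := by
    rw [hwser]
    calc ‖∑' n : ℕ, (μ⁻¹) ^ (n + 1) * ((c n : ℝ) : ℂ)‖
        ≤ ∑' n : ℕ, ‖(μ⁻¹) ^ (n + 1) * ((c n : ℝ) : ℂ)‖ := norm_tsum_le_tsum_norm hsnorm
      _ ≤ ∑' n : ℕ, ρ⁻¹ ^ (n + 1) * |c n| := Summable.tsum_le_tsum htermle hsnorm hsabs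
      _ = -tR := habs
  have hwnorm : ‖w‖ = Df := by
    rw [hwD, norm_neg, Complex.norm_real, Real.norm_eq_abs, abs_of_pos hDf0]
  linarith
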